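/- Let k ⊆ K be fields with K perfect, and let V be a K⊗ₖK-module with dim_K(ₖV) = n < ∞ and dim_K(V_K) = m < ∞. Then for the right dual V* (with action (a·ψ·b)(x) = aψ(bx) on Hom_K(V_K,K)) one has dim_K(ₖ(V*)) = m and dim_K((V*)_K) = n. -/

import Mathlib

open TensorProduct

noncomputable section

variable (k K : Type*) [Field k] [Field K] [Algebra k K]
variable (V : Type*) [AddCommGroup V] [Module (K ⊗[k] K) V]

/-- `V` regarded as a `K`-vector space via the *left* action `a • v = (a ⊗ 1) • v`. -/
@[nolint unusedArguments]
def Vleft (k K : Type*) [Field k] [Field K] [Algebra k K]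
    (V : Type*) [AddCommGroup V] [Module (K ⊗[k] K) V] : Type _ := V

instance : AddCommGroup (Vleft k K V) := inferInstanceAs (AddCommGroup V)

noncomputable instance : Module K (Vleft k K V) :=
  Module.compHom V (Algebra.TensorProduct.includeLeftRingHom : K →+* K ⊗[k] K)

/-- `V` regarded as a `K`-vector space via the *right* action `b • v = (1 ⊗ b) • v`. -/
@[nolint unusedArguments]
def Vright (k K : Type*) [Field k] [Field K] [Algebra k K]
    (V : Type*) [AddCommGroup V] [Module (K ⊗[k] K) V] : Type _ := V

instance : AddCommGroup (Vright k K V) := inferInstanceAs (AddCommGroup V)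

noncomputable instance : Module K (Vright k K V) :=
  Module.compHom V (Algebra.TensorProduct.includeRight : K →ₐ[k] K ⊗[k] K).toRingHom

def Vright.toV : Vright k K V → V := fun v => v

def Vright.of : V → Vright k K V := fun v => v

/-- The left action `v ↦ (b ⊗ 1) • v` of `b ∈ K` on `V` is `K`-linear for the right
`K`-structure on `V` (the two actions commute). -/
noncomputable def lsV (b : K) : Vright k K V →ₗ[K] Vright k K V where
  toFun v := Vright.of k K V ((b ⊗ₜ[k] (1 : K)) • Vright.toV k K V v)
  map_add' v w := smul_add (b ⊗ₜ[k] (1 : K)) (Vright.toV k K V v) (Vright.toV k K V w)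
  map_smul' a v := by
    show (b ⊗ₜ[k] (1 : K)) • (((1 : K) ⊗ₜ[k] a) • Vright.toV k K V v) =
      ((1 : K) ⊗ₜ[k] a) • ((b ⊗ₜ[k] (1 : K)) • Vright.toV k K V v)
    rw [smul_smul, smul_smul, mul_comm]

/-- The right dual `V* = Hom_K(V_K, K)` of `V`, regarded as a `K`-vector space via its
*right* `K`-action `(ψ · b)(x) = ψ(b x)` (the left action `(a · ψ)(x) = a ψ(x)` is the
canonical `K`-module structure on `Vright k K V →ₗ[K] K`). -/
@[nolint unusedArguments]
def DualRight (k K : Type*) [Field k] [Field K] [Algebra k K]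
    (V : Type*) [AddCommGroup V] [Module (K ⊗[k] K) V] : Type _ := Vright k K V →ₗ[K] K

def DualRight.of : (Vright k K V →ₗ[K] K) → DualRight k K V := fun ψ => ψ

def DualRight.to : DualRight k K V → (Vright k K V →ₗ[K] K) := fun ψ => ψ

noncomputable instance : AddCommGroup (DualRight k K V) :=
  inferInstanceAs (AddCommGroup (Vright k K V →ₗ[K] K))

/-- The right `K`-action `(ψ · b)(x) = ψ(b x)` on the right dual `V*`. -/
noncomputable instance : Module K (DualRight k K V) where
  smul b ψ := DualRight.of k K V ((DualRight.to k K V ψ).comp (lsV k K V b))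
  one_smul ψ := by
    refine LinearMap.ext fun v => ?_
    show (DualRight.to k K V ψ)
      (Vright.of k K V (((1 : K) ⊗ₜ[k] (1 : K)) • Vright.toV k K V v)) =
        (DualRight.to k K V ψ) v
    have h : ((1 : K) ⊗ₜ[k] (1 : K)) • Vright.toV k K V v = Vright.toV k K V v := by
      rw [← Algebra.TensorProduct.one_def, one_smul]
    rw [h]
    rfl
  mul_smul b c ψ := by
    refine LinearMap.ext fun v => ?_
    show (DualRight.to k K V ψ)
      (Vright.of k K V (((b * c) ⊗ₜ[k] (1 : K)) • Vright.toV k K V v)) =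
        (DualRight.to k K V ψ) (Vright.of k K V ((c ⊗ₜ[k] (1 : K)) • Vright.toV k K V
          (Vright.of k K V ((b ⊗ₜ[k] (1 : K)) • Vright.toV k K V v))))
    have h : (c ⊗ₜ[k] (1 : K)) • ((b ⊗ₜ[k] (1 : K)) • Vright.toV k K V v) =
        ((b * c) ⊗ₜ[k] (1 : K)) • Vright.toV k K V v := by
      rw [smul_smul, Algebra.TensorProduct.tmul_mul_tmul, mul_one, mul_comm c b]
    exact (congrArg (DualRight.to k K V ψ) (congrArg (Vright.of k K V) h)).symm
  smul_zero b := rfl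
  smul_add b ψ χ := rfl
  add_smul b c ψ := by
    refine LinearMap.ext fun v => ?_
    show (DualRight.to k K V ψ)
      (Vright.of k K V (((b + c) ⊗ₜ[k] (1 : K)) • Vright.toV k K V v)) =
        (DualRight.to k K V ψ) (Vright.of k K V ((b ⊗ₜ[k] (1 : K)) • Vright.toV k K V v)) +
          (DualRight.to k K V ψ) (Vright.of k K V ((c ⊗ₜ[k] (1 : K)) • Vright.toV k K V v))
    have h : ((b + c) ⊗ₜ[k] (1 : K)) • Vright.toV k K V v =
        (b ⊗ₜ[k] (1 : K)) • Vright.toV k K V v + (c ⊗ₜ[k] (1 : K)) • Vright.toV k K V v := by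
      rw [TensorProduct.add_tmul, add_smul]
    rw [show Vright.of k K V (((b + c) ⊗ₜ[k] (1 : K)) • Vright.toV k K V v) =
      Vright.of k K V ((b ⊗ₜ[k] (1 : K)) • Vright.toV k K V v) +
      Vright.of k K V ((c ⊗ₜ[k] (1 : K)) • Vright.toV k K V v) from congrArg _ h]
    exact map_add _ _ _
  zero_smul ψ := by
    refine LinearMap.ext fun v => ?_
    show (DualRight.to k K V ψ)
      (Vright.of k K V (((0 : K) ⊗ₜ[k] (1 : K)) • Vright.toV k K V v)) = 0
    have h : ((0 : K) ⊗ₜ[k] (1 : K)) • Vright.toV k K V v = 0 := by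
      rw [TensorProduct.zero_tmul, zero_smul]
    rw [show Vright.of k K V (((0 : K) ⊗ₜ[k] (1 : K)) • Vright.toV k K V v) = 0 from
      congrArg _ h]
    exact map_zero _

section Key

open Module

universe u v

variable (L K : Type u) (V : Type v) [Field L] [Field K] [AddCommGroup V] [Module K V]
  [Module L V] [SMulCommClass L K V]

/-- scalar action of `l : L` as a `K`-linear endomorphism. -/
def lmapAux (l : L) : V →ₗ[K] V where
  toFun v := l • v
  map_add' := smul_add l
  map_smul' a v := smul_comm l a v

@[nolint unusedArguments]
def DualTw (L K : Type u) (V : Type v) [Field L] [Field K] [AddCommGroup V] [Module K V]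
    [Module L V] [SMulCommClass L K V] : Type (max u v) := V →ₗ[K] K

namespace DualTw

def of : (V →ₗ[K] K) → DualTw L K V := id
def toL : DualTw L K V → (V →ₗ[K] K) := id

instance : AddCommGroup (DualTw L K V) := inferInstanceAs (AddCommGroup (V →ₗ[K] K))
instance : Module K (DualTw L K V) := inferInstanceAs (Module K (V →ₗ[K] K))

instance : Module L (DualTw L K V) where
  smul l ψ := of L K V ((toL L K V ψ).comp (lmapAux L K V l))
  one_smul ψ := LinearMap.ext fun v => by
    show toL L K V ψ ((1 : L) • v) = toL L K V ψ v
    rw [one_smul]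
  mul_smul l m ψ := LinearMap.ext fun v => by
    show toL L K V ψ ((l * m) • v) = toL L K V ψ (m • l • v)
    rw [mul_comm, mul_smul]
  smul_zero l := rfl
  smul_add l ψ χ := rfl
  add_smul l m ψ := LinearMap.ext fun v => by
    show toL L K V ψ ((l + m) • v) = toL L K V ψ (l • v) + toL L K V ψ (m • v)
    rw [add_smul, map_add]
  zero_smul ψ := LinearMap.ext fun v => by
    show toL L K V ψ ((0 : L) • v) = 0
    rw [zero_smul, map_zero]

theorem smul_def (l : L) (ψ : DualTw L K V) (v : V) :
    toL L K V (l • ψ) v = toL L K V ψ (l • v) := rfl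

end DualTw

end Key

section KeyMain

universe u' v'

open Module Cardinal

set_option maxHeartbeats 2000000 in
set_option synthInstance.maxHeartbeats 400000 in
theorem key_aux (L K : Type u') [Field L] [Field K] :
    ∀ (n : ℕ) (V : Type v') [AddCommGroup V] [Module K V] [Module L V]
      [SMulCommClass L K V] [FiniteDimensional K V] [FiniteDimensional L V],
      Module.finrank K V = n →
      FiniteDimensional L (DualTw L K V) ∧
        Module.finrank L (DualTw L K V) = Module.finrank L V := by
  intro n
  induction n using Nat.strong_induction_on with
  | _ n IH =>
    intro V _ _ _ _ _ _ hn
    by_cases htriv : Subsingleton V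
    · haveI : Subsingleton (DualTw L K V) :=
        ⟨fun ψ χ => LinearMap.ext fun v => by
          rw [Subsingleton.elim v 0]
          exact (map_zero (DualTw.toL L K V ψ)).trans (map_zero (DualTw.toL L K V χ)).symm⟩
      haveI : Finite (DualTw L K V) := Finite.of_subsingleton
      refine ⟨Module.Finite.of_finite, ?_⟩
      rw [Module.finrank_zero_of_subsingleton, Module.finrank_zero_of_subsingleton]
    by_cases hP : ∃ N : Submodule K V, N ≠ ⊥ ∧ N ≠ ⊤ ∧ ∀ (l : L) (v : V), v ∈ N → l • v ∈ N
    · obtain ⟨N, hNbot, hNtop, hNst⟩ := hP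
      -- L-module structure on the submodule N
      letI : Module L ↥N :=
        { smul := fun l x => ⟨l • x.1, hNst l x.1 x.2⟩
          one_smul := fun x => Subtype.ext (one_smul L x.1)
          mul_smul := fun l m x => Subtype.ext (mul_smul l m x.1)
          smul_zero := fun l => Subtype.ext (smul_zero l)
          smul_add := fun l x y => Subtype.ext (smul_add l x.1 y.1)
          add_smul := fun l m x => Subtype.ext (add_smul l m x.1)
          zero_smul := fun x => Subtype.ext (zero_smul L x.1) }
      haveI : SMulCommClass L K ↥N :=
        ⟨fun l a x => Subtype.ext (smul_comm l a x.1)⟩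
      -- the twin submodule over L
      let NL : Submodule L V :=
        { carrier := N
          add_mem' := fun h h' => N.add_mem h h'
          zero_mem' := N.zero_mem
          smul_mem' := fun l v hv => hNst l v hv }
      let eN : ↥NL ≃ₗ[L] ↥N :=
        { toFun := fun x => ⟨x.1, x.2⟩
          invFun := fun x => ⟨x.1, x.2⟩
          map_add' := fun x y => rfl
          map_smul' := fun l x => rfl
          left_inv := fun x => rfl
          right_inv := fun x => rfl }
      haveI : FiniteDimensional L ↥N := Module.Finite.equiv eN
      -- L-module structure on the quotient
      let qs : L → (V ⧸ N) →ₗ[K] (V ⧸ N) := fun l =>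
        Submodule.mapQ N N (lmapAux L K V l) (fun v hv => hNst l v hv)
      have hq : ∀ (l : L) (v : V), qs l (Submodule.Quotient.mk v)
          = Submodule.Quotient.mk (l • v) := fun l v => Submodule.mapQ_apply _ _ _ v
      letI : Module L (V ⧸ N) :=
        { smul := fun l q => qs l q
          one_smul := fun q => by
            obtain ⟨v, rfl⟩ := Submodule.Quotient.mk_surjective N q
            show qs 1 (Submodule.Quotient.mk v) = Submodule.Quotient.mk v
            rw [hq, one_smul]
          mul_smul := fun l m q => by
            obtain ⟨v, rfl⟩ := Submodule.Quotient.mk_surjective N q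
            show qs (l * m) (Submodule.Quotient.mk v) = qs l (qs m (Submodule.Quotient.mk v))
            rw [hq, hq, hq, mul_smul]
          smul_zero := fun l => by
            show qs l 0 = 0
            rw [map_zero]
          smul_add := fun l q q' => by
            show qs l (q + q') = qs l q + qs l q'
            rw [map_add]
          add_smul := fun l m q => by
            obtain ⟨v, rfl⟩ := Submodule.Quotient.mk_surjective N q
            show qs (l + m) (Submodule.Quotient.mk v)
              = qs l (Submodule.Quotient.mk v) + qs m (Submodule.Quotient.mk v)
            rw [hq, hq, hq, add_smul, Submodule.Quotient.mk_add]
          zero_smul := fun q => by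
            obtain ⟨v, rfl⟩ := Submodule.Quotient.mk_surjective N q
            show qs 0 (Submodule.Quotient.mk v) = 0
            rw [hq, zero_smul, Submodule.Quotient.mk_zero] }
      have hsm : ∀ (l : L) (v : V), l • (Submodule.Quotient.mk v : V ⧸ N)
          = Submodule.Quotient.mk (l • v) := hq
      haveI : SMulCommClass L K (V ⧸ N) :=
        ⟨fun l a q => by
          obtain ⟨v, rfl⟩ := Submodule.Quotient.mk_surjective N q
          rw [← Submodule.Quotient.mk_smul, hsm, hsm, ← Submodule.Quotient.mk_smul,
            smul_comm]⟩
      let mkL : V →ₗ[L] (V ⧸ N) :=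
        { toFun := Submodule.Quotient.mk
          map_add' := fun v w => by rw [Submodule.Quotient.mk_add]
          map_smul' := fun l v => (hsm l v).symm }
      have hmkL_surj : Function.Surjective mkL := Submodule.Quotient.mk_surjective N
      haveI : FiniteDimensional L (V ⧸ N) := Module.Finite.of_surjective mkL hmkL_surj
      -- finrank facts over K, for the induction
      have hNlt : finrank K ↥N < n := hn ▸ Submodule.finrank_lt hNtop
      have hQK : finrank K (V ⧸ N) + finrank K ↥N = finrank K V :=
        Submodule.finrank_quotient_add_finrank N
      have hNpos : finrank K ↥N ≠ 0 := by
        rw [Ne, Submodule.finrank_eq_zero]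
        exact hNbot
      have hQlt : finrank K (V ⧸ N) < n := by omega
      obtain ⟨fdN, hdN⟩ := IH _ hNlt ↥N rfl
      obtain ⟨fdQ, hdQ⟩ := IH _ hQlt (V ⧸ N) rfl
      -- dual side maps
      let res : DualTw L K V →ₗ[L] DualTw L K ↥N :=
        { toFun := fun ψ => DualTw.of L K ↥N ((DualTw.toL L K V ψ).domRestrict N)
          map_add' := fun ψ χ => rfl
          map_smul' := fun l ψ => rfl }
      have hres_surj : Function.Surjective res := fun φ => by
        obtain ⟨ψ, hψ⟩ := Subspace.dualRestrict_surjective (W := N) (DualTw.toL L K ↥N φ)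
        exact ⟨DualTw.of L K V ψ, hψ⟩
      let ι : DualTw L K (V ⧸ N) →ₗ[L] DualTw L K V :=
        { toFun := fun φ => DualTw.of L K V ((DualTw.toL L K (V ⧸ N) φ).comp N.mkQ)
          map_add' := fun φ χ => rfl
          map_smul' := fun l φ => LinearMap.ext fun v => by
            show DualTw.toL L K (V ⧸ N) φ (l • (Submodule.Quotient.mk v : V ⧸ N))
              = DualTw.toL L K (V ⧸ N) φ (Submodule.Quotient.mk (l • v))
            rw [hsm] }
      have hι_inj : Function.Injective ι := fun φ χ h => LinearMap.ext fun q => by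
        obtain ⟨v, rfl⟩ := Submodule.Quotient.mk_surjective N q
        exact congrArg (fun (ψ : DualTw L K V) => DualTw.toL L K V ψ v) h
      have hker : LinearMap.ker res = LinearMap.range ι := by
        ext ψ
        constructor
        · intro hψ
          have hψ0 : ∀ v ∈ N, DualTw.toL L K V ψ v = 0 := fun v hv =>
            congrArg (fun (φ : DualTw L K ↥N) => DualTw.toL L K ↥N φ ⟨v, hv⟩) hψ
          have hle : N ≤ LinearMap.ker (DualTw.toL L K V ψ) := fun v hv => hψ0 v hv
          refine ⟨DualTw.of L K (V ⧸ N) (N.liftQ (DualTw.toL L K V ψ) hle), ?_⟩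
          exact LinearMap.ext fun v => Submodule.liftQ_apply (h := hle) N (DualTw.toL L K V ψ) v
        · rintro ⟨φ, rfl⟩
          refine LinearMap.ext fun x => ?_
          show DualTw.toL L K (V ⧸ N) φ (Submodule.Quotient.mk x.1) = 0
          rw [(Submodule.Quotient.mk_eq_zero N).2 x.2, map_zero]
      let e1 : DualTw L K (V ⧸ N) ≃ₗ[L] ↥(LinearMap.range ι) := LinearEquiv.ofInjective ι hι_inj
      let e2 : ↥(LinearMap.ker res) ≃ₗ[L] ↥(LinearMap.range ι) := LinearEquiv.ofEq _ _ hker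
      let e3 : (DualTw L K V ⧸ LinearMap.ker res) ≃ₗ[L] DualTw L K ↥N :=
        LinearMap.quotKerEquivOfSurjective res hres_surj
      haveI fdD : FiniteDimensional L (DualTw L K V) := by
        refine Module.rank_lt_aleph0_iff.1 ?_
        rw [← rank_quotient_add_rank_of_divisionRing (LinearMap.ker res)]
        refine Cardinal.add_lt_aleph0 ?_ ?_
        · rw [e3.rank_eq]
          exact Module.rank_lt_aleph0_iff.2 fdN
        · rw [e2.rank_eq, ← e1.rank_eq]
          exact Module.rank_lt_aleph0_iff.2 fdQ
      refine ⟨fdD, ?_⟩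
      have f1 : finrank L (DualTw L K V)
          = finrank L (DualTw L K ↥N) + finrank L (DualTw L K (V ⧸ N)) := by
        have h := Submodule.finrank_quotient_add_finrank (LinearMap.ker res)
        rw [e3.finrank_eq, e2.finrank_eq, ← e1.finrank_eq] at h
        omega
      have f2 : finrank L (V ⧸ N) + finrank L ↥NL = finrank L V := by
        have h := LinearMap.finrank_range_add_finrank_ker mkL
        have hrt : LinearMap.range mkL = ⊤ := LinearMap.range_eq_top.2 hmkL_surj
        have hkerm : LinearMap.ker mkL = NL := by
          ext v
          exact Submodule.Quotient.mk_eq_zero N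
        rw [hrt, finrank_top, hkerm] at h
        exact h
      rw [f1, hdN, hdQ, eN.symm.finrank_eq]
      omega
    · -- simple case: no proper nonzero invariant subspace
      haveI : Nontrivial V := not_subsingleton_iff_nontrivial.1 htriv
      have hsimple : ∀ N : Submodule K V,
          (∀ (l : L) (v : V), v ∈ N → l • v ∈ N) → N = ⊥ ∨ N = ⊤ := by
        intro N hst
        by_contra h
        push_neg at h
        exact hP ⟨N, h.1, h.2, fun l v hv => hst l v hv⟩
      let ρ : L →+* Module.End K V :=
        { toFun := lmapAux L K V
          map_one' := LinearMap.ext fun v => one_smul L v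
          map_mul' := fun l m => LinearMap.ext fun v => mul_smul l m v
          map_zero' := LinearMap.ext fun v => zero_smul L v
          map_add' := fun l m => LinearMap.ext fun v => add_smul l m v }
      let F : Subalgebra K (Module.End K V) := Algebra.adjoin K (Set.range ρ)
      have hrcomm : ∀ a ∈ Set.range ρ, ∀ b ∈ Set.range ρ, a * b = b * a := by
        rintro a ⟨l, rfl⟩ b ⟨m, rfl⟩
        rw [← map_mul, ← map_mul, mul_comm]
      have hcomm : ∀ (T : ↥F) (l : L),
          (T : Module.End K V) * ρ l = ρ l * (T : Module.End K V) := by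
        intro T l
        refine Algebra.adjoin_induction (p := fun x _ => x * ρ l = ρ l * x)
          ?_ ?_ ?_ ?_ T.2
        · rintro x ⟨m, rfl⟩
          rw [← map_mul, ← map_mul, mul_comm]
        · intro r
          exact Algebra.commutes r (ρ l)
        · intro x y _ _ hx hy
          rw [add_mul, mul_add, hx, hy]
        · intro x y _ _ hx hy
          rw [mul_assoc, hy, ← mul_assoc, hx, mul_assoc]
      have hmc : ∀ x y : ↥F, x * y = y * x := by
        intro x y
        have hle := Algebra.adjoin_le_centralizer_centralizer K (Set.range ρ)
        exact Subtype.ext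
          (Set.centralizer_centralizer_comm_of_comm hrcomm x.1 (hle x.2) y.1 (hle y.2))
      haveI : FiniteDimensional K ↥F :=
        FiniteDimensional.of_injective (Subalgebra.val F).toLinearMap Subtype.val_injective
      have hfield : IsField ↥F := by
        refine ⟨⟨0, 1, fun h01 => ?_⟩, hmc, ?_⟩
        · obtain ⟨v, hv⟩ := exists_ne (0 : V)
          apply hv
          have h := congrArg (fun T : ↥F => (T : Module.End K V) v) h01
          simpa using h.symm
        · intro T hT
          have hT1 : (T : Module.End K V) ≠ 0 := fun h => hT (Subtype.ext h)
          have hkst : ∀ (l : L) (v : V), v ∈ LinearMap.ker (T : Module.End K V) →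
              l • v ∈ LinearMap.ker (T : Module.End K V) := by
            intro l v hv
            refine LinearMap.mem_ker.2 ?_
            have hc : (T : Module.End K V) (l • v) = l • ((T : Module.End K V) v) :=
              congrArg (fun f : Module.End K V => f v) (hcomm T l)
            rw [hc, LinearMap.mem_ker.1 hv, smul_zero]
          have hker : LinearMap.ker (T : Module.End K V) = ⊥ := by
            rcases hsimple (LinearMap.ker (T : Module.End K V)) hkst with h | h
            · exact h
            · exact absurd (LinearMap.ker_eq_top.1 h) hT1
          have hrst : ∀ (l : L) (v : V), v ∈ LinearMap.range (T : Module.End K V) →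
              l • v ∈ LinearMap.range (T : Module.End K V) := by
            rintro l v ⟨w, rfl⟩
            exact ⟨l • w, congrArg (fun f : Module.End K V => f w) (hcomm T l)⟩
          have hrange : LinearMap.range (T : Module.End K V) = ⊤ := by
            rcases hsimple (LinearMap.range (T : Module.End K V)) hrst with h | h
            · exact absurd (LinearMap.range_eq_bot.1 h) hT1
            · exact h
          have hsurj := LinearMap.range_eq_top.1 hrange
          let mulT : ↥F →ₗ[K] ↥F :=
            { toFun := fun S => S * T
              map_add' := fun S S' => add_mul S S' T
              map_smul' := fun a S => smul_mul_assoc a S T }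
          have hz : ∀ S : ↥F, S * T = 0 → S = 0 := by
            intro S hS
            refine Subtype.ext (LinearMap.ext fun v => ?_)
            obtain ⟨w, rfl⟩ := hsurj v
            have h2 := congrArg (fun X : ↥F => (X : Module.End K V) w) hS
            simpa using h2
          have hinj : Function.Injective mulT := by
            intro S S' h
            have h' : (S - S') * T = 0 := by
              rw [sub_mul, show S * T = mulT S from rfl, show S' * T = mulT S' from rfl, h,
                sub_self]
            exact sub_eq_zero.1 (hz _ h')
          obtain ⟨S, hS⟩ := LinearMap.surjective_of_injective hinj 1
          exact ⟨S, by rw [hmc]; exact hS⟩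
      letI : Field ↥F := hfield.toField
      letI : Module ↥F V := Module.compHom V (Subalgebra.val F).toRingHom
      haveI hKFV : IsScalarTower K ↥F V :=
        ⟨fun a T v => by
          show ((a • T : ↥F) : Module.End K V) v = a • ((T : Module.End K V) v)
          rw [SetLike.val_smul, LinearMap.smul_apply]⟩
      let ρF : L →+* ↥F :=
        { toFun := fun l => ⟨ρ l, Algebra.subset_adjoin ⟨l, rfl⟩⟩
          map_one' := Subtype.ext (map_one ρ)
          map_mul' := fun l m => Subtype.ext (map_mul ρ l m)
          map_zero' := Subtype.ext (map_zero ρ)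
          map_add' := fun l m => Subtype.ext (map_add ρ l m) }
      letI : Module L ↥F := Module.compHom ↥F ρF
      haveI hLFV : IsScalarTower L ↥F V := ⟨fun l T v => rfl⟩
      letI : Module ↥F (DualTw L K V) :=
        { smul := fun T ψ => DualTw.of L K V
            ((DualTw.toL L K V ψ).comp (T : Module.End K V))
          one_smul := fun ψ => LinearMap.ext fun v => rfl
          mul_smul := fun T S ψ => by
            rw [hmc]
            exact LinearMap.ext fun v => rfl
          smul_zero := fun T => rfl
          smul_add := fun T ψ χ => rfl
          add_smul := fun T S ψ => LinearMap.ext fun v => by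
            show DualTw.toL L K V ψ ((T : Module.End K V) v + (S : Module.End K V) v)
              = DualTw.toL L K V ψ ((T : Module.End K V) v)
                + DualTw.toL L K V ψ ((S : Module.End K V) v)
            exact map_add _ _ _
          zero_smul := fun ψ => LinearMap.ext fun v => by
            show DualTw.toL L K V ψ (((0 : ↥F) : Module.End K V) v) = 0
            rw [ZeroMemClass.coe_zero, LinearMap.zero_apply, map_zero] }
      haveI : IsScalarTower K ↥F (DualTw L K V) :=
        ⟨fun a T ψ => LinearMap.ext fun v => by
          show DualTw.toL L K V ψ (((a • T : ↥F) : Module.End K V) v)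
            = a • DualTw.toL L K V ψ ((T : Module.End K V) v)
          rw [SetLike.val_smul, LinearMap.smul_apply, map_smul]⟩
      haveI : IsScalarTower L ↥F (DualTw L K V) :=
        ⟨fun l T ψ => LinearMap.ext fun v => by
          have hc : (T : Module.End K V) ((ρ l) v) = (ρ l) ((T : Module.End K V) v) :=
            congrArg (fun f : Module.End K V => f v) (hcomm T l)
          exact (congrArg (DualTw.toL L K V ψ) hc).symm⟩
      haveI : FiniteDimensional ↥F V := @Module.Finite.right K ↥F V _ _ _ _ _ _ hKFV _
      haveI : FiniteDimensional K (DualTw L K V) :=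
        inferInstanceAs (FiniteDimensional K (V →ₗ[K] K))
      haveI : FiniteDimensional ↥F (DualTw L K V) := Module.Finite.right K ↥F (DualTw L K V)
      haveI fdLF : FiniteDimensional L ↥F := by
        obtain ⟨v₀, hv₀⟩ := exists_ne (0 : V)
        let j : ↥F →ₗ[L] V :=
          { toFun := fun T => T • v₀
            map_add' := fun T S => add_smul T S v₀
            map_smul' := fun l T => smul_assoc l T v₀ }
        refine FiniteDimensional.of_injective j ?_
        intro T S h
        by_contra hne
        refine hv₀ ?_
        have h0 : (T - S) • v₀ = (0 : V) := by
          rw [show (T - S) • v₀ = T • v₀ - S • v₀ from sub_smul T S v₀, show T • v₀ = j T from rfl, show S • v₀ = j S from rfl, h, sub_self]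
        calc v₀ = ((T - S)⁻¹ * (T - S)) • v₀ := by
              rw [inv_mul_cancel₀ (sub_ne_zero.2 hne), one_smul]
          _ = (T - S)⁻¹ • ((T - S) • v₀) := by rw [mul_smul]
          _ = 0 := by rw [h0, smul_zero]
      have hdual : finrank K (DualTw L K V) = finrank K V := Subspace.dual_finrank_eq
      have h6 : 0 < finrank K ↥F := Module.finrank_pos
      have hFV : finrank ↥F (DualTw L K V) = finrank ↥F V := by
        refine Nat.eq_of_mul_eq_mul_left h6 ?_
        rw [Module.finrank_mul_finrank K ↥F (DualTw L K V), @Module.finrank_mul_finrank K ↥F V _ _ _ _ _ _ hKFV _ _ _ _,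
          hdual]
      refine ⟨?_, ?_⟩
      · refine Module.rank_lt_aleph0_iff.1 (Cardinal.lift_lt_aleph0.1 ?_)
        rw [← lift_rank_mul_lift_rank L ↥F (DualTw L K V)]
        exact Cardinal.mul_lt_aleph0
          (Cardinal.lift_lt_aleph0.2 (Module.rank_lt_aleph0_iff.2 inferInstance))
          (Cardinal.lift_lt_aleph0.2 (Module.rank_lt_aleph0_iff.2 inferInstance))
      · rw [← Module.finrank_mul_finrank L ↥F (DualTw L K V), hFV,
          @Module.finrank_mul_finrank L ↥F V _ _ _ _ _ _ hLFV _ _ _ _]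

end KeyMain

/-- A copy of `K` carrying the *left* action on `Vright k K V`. -/
@[nolint unusedArguments]
def Lc (k K : Type*) [Field k] [Field K] [Algebra k K]
    (V : Type*) [AddCommGroup V] [Module (K ⊗[k] K) V] : Type _ := K

instance : Field (Lc k K V) := inferInstanceAs (Field K)

noncomputable instance : Module (Lc k K V) (Vright k K V) :=
  Module.compHom V (Algebra.TensorProduct.includeLeftRingHom : K →+* K ⊗[k] K)

instance : SMulCommClass (Lc k K V) K (Vright k K V) := by
  refine ⟨fun l a v => ?_⟩
  show ((show K from l) ⊗ₜ[k] (1 : K)) • (((1 : K) ⊗ₜ[k] a) • (show V from v))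
    = ((1 : K) ⊗ₜ[k] a) • (((show K from l) ⊗ₜ[k] (1 : K)) • (show V from v))
  rw [smul_smul, smul_smul, mul_comm]

/-- Let `k ⊆ K` be fields with `K` perfect, and let `V` be a `K ⊗ₖ K`-module
with `dim_K ₖV = n < ∞` and `dim_K V_K = m < ∞`.  Then for the right dual
`V* = Hom_K(V_K, K)` (with action `(a·ψ·b)(x) = a ψ(b x)`) one has `dim_K ₖ(V*) = m`
(the left `K`-structure on `V*` is the canonical one on `Vright k K V →ₗ[K] K`) and
`dim_K (V*)_K = n` (the right `K`-structure is the one of `DualRight k K V`). -/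

theorem stmt18 [PerfectField K] (n m : ℕ)
    (hfl : FiniteDimensional K (Vleft k K V)) (hl : Module.finrank K (Vleft k K V) = n)
    (hfr : FiniteDimensional K (Vright k K V)) (hr : Module.finrank K (Vright k K V) = m) :
    Module.finrank K (Vright k K V →ₗ[K] K) = m ∧
      Module.finrank K (DualRight k K V) = n := by
  constructor
  · rw [← hr]
    exact Subspace.dual_finrank_eq
  · haveI : FiniteDimensional (Lc k K V) (Vright k K V) := hfl
    obtain ⟨-, hkey⟩ := key_aux (Lc k K V) K (Module.finrank K (Vright k K V))
      (Vright k K V) rfl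
    have h2 : Module.finrank (Lc k K V) (Vright k K V) = n := hl
    have h3 : Module.finrank K (DualRight k K V)
        = Module.finrank (Lc k K V) (DualTw (Lc k K V) K (Vright k K V)) := rfl
    rw [h3, hkey, h2]

end
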